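/- Let S be a separable metric space and let {F_n} be a countable collection of closed sets in S which is a π-system and whose complements form a base of the topology. For each n and each rational ε>0 fix a Urysohn function U_{n,ε} (continuous, taking values in [0,1], equal to 0 exactly on the complement of the ε-neighborhood of F_n and equal to 1 exactly on F_n). If X_k, X are random elements of S and for every n and rational ε>0 we have E[U_{n,ε}(X_k)] → E[U_{n,ε}(X)] as k→∞, then for every bounded continuous f: S → ℝ, E[f(X_k)] → E[f(X)], i.e., X_k converges in distribution to X. -/
import Mathlib


open MeasureTheory Filter Topology
open scoped ENNReal NNReal

/-- reduction of convergence in distribution to a countable family of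
Urysohn test functions associated with a co-base of closed sets forming a π-system. -/
theorem stmt_0 {S : Type*} [MetricSpace S] [TopologicalSpace.SeparableSpace S]
    [MeasurableSpace S] [BorelSpace S]
    {Ω Ω' : Type*} [MeasurableSpace Ω] [MeasurableSpace Ω']
    (P : Measure Ω) (P' : Measure Ω') [IsProbabilityMeasure P] [IsProbabilityMeasure P']
    (F : ℕ → Set S) (hFclosed : ∀ n, IsClosed (F n))
    (hpi : ∀ m n, ∃ k, F m ∩ F n = F k)
    (hbase : TopologicalSpace.IsTopologicalBasis {s : Set S | ∃ n, s = (F n)ᶜ})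
    (U : ℕ → ℚ → S → ℝ)
    (hU : ∀ n (ε : ℚ), 0 < ε →
      Continuous (U n ε) ∧ (∀ x, U n ε x ∈ Set.Icc (0 : ℝ) 1) ∧
      (∀ x, U n ε x = 0 ↔ x ∉ Metric.thickening (ε : ℝ) (F n)) ∧
      (∀ x, U n ε x = 1 ↔ x ∈ F n))
    (X : ℕ → Ω → S) (Y : Ω' → S) (hX : ∀ k, Measurable (X k)) (hY : Measurable Y)
    (hconv : ∀ n (ε : ℚ), 0 < ε →
      Tendsto (fun k => ∫ ω, U n ε (X k ω) ∂P) atTop (𝓝 (∫ ω, U n ε (Y ω) ∂P'))) :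
    ∀ f : BoundedContinuousFunction S ℝ,
      Tendsto (fun k => ∫ ω, f (X k ω) ∂P) atTop (𝓝 (∫ ω, f (Y ω) ∂P')) := by
  classical
  set μm : ℕ → Measure S := fun k => P.map (X k) with hμm
  set νm : Measure S := P'.map Y with hνm
  have hμprob : ∀ k, IsProbabilityMeasure (μm k) :=
    fun k => Measure.isProbabilityMeasure_map (hX k).aemeasurable
  have hνprob : IsProbabilityMeasure νm := Measure.isProbabilityMeasure_map hY.aemeasurable
  -- transported convergence of integrals of Urysohn functions
  have hintU : ∀ n (ε : ℚ), 0 < ε →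
      Tendsto (fun k => ∫ x, U n ε x ∂(μm k)) atTop (𝓝 (∫ x, U n ε x ∂νm)) := by
    intro n ε hε
    have hc := (hU n ε hε).1
    have h1 : ∀ k, ∫ x, U n ε x ∂(μm k) = ∫ ω, U n ε (X k ω) ∂P := fun k =>
      integral_map (hX k).aemeasurable hc.aestronglyMeasurable
    have h2 : ∫ x, U n ε x ∂νm = ∫ ω, U n ε (Y ω) ∂P' :=
      integral_map hY.aemeasurable hc.aestronglyMeasurable
    simp only [h1, h2]
    exact hconv n ε hε
  -- key estimate: liminf of complements of the F n
  have key : ∀ n, νm (F n)ᶜ ≤ atTop.liminf (fun k => μm k (F n)ᶜ) := by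
    intro n
    refine ENNReal.le_of_forall_pos_le_add (fun η hη _ => ?_)
    haveI := hνprob
    -- find a small thickening with measure close to that of F n
    obtain ⟨δ, hδpos, hδ⟩ : ∃ δ > (0:ℝ),
        νm (Metric.thickening δ (F n)) < νm (F n) + η := by
      have ht := tendsto_measure_thickening_of_isClosed (μ := νm) (s := F n)
        ⟨1, one_pos, measure_ne_top _ _⟩ (hFclosed n)
      have hlt : νm (F n) < νm (F n) + η :=
        ENNReal.lt_add_right (measure_ne_top _ _) (by exact_mod_cast hη.ne')
      have h2 := (ht.eventually_lt_const hlt).and self_mem_nhdsWithin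
      obtain ⟨δ, hδ1, hδ2⟩ := h2.exists
      exact ⟨δ, hδ2, hδ1⟩
    obtain ⟨ε, hε0, hεδ⟩ := exists_rat_btwn hδpos
    have hεQ : (0:ℚ) < ε := by exact_mod_cast hε0
    obtain ⟨hUcont, hUmem, hU0, hU1⟩ := hU n ε hεQ
    set g : S → ℝ := fun x => 1 - U n ε x with hg
    have hgcont : Continuous g := continuous_const.sub hUcont
    have hg01 : ∀ x, g x ∈ Set.Icc (0:ℝ) 1 := by
      intro x
      have h := hUmem x
      simp only [Set.mem_Icc] at h ⊢
      constructor
      · simp only [hg]; linarith [h.2]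
      · simp only [hg]; linarith [h.1]
    have hgint : ∀ (μ : Measure S), IsProbabilityMeasure μ → Integrable g μ := by
      intro μ hμ
      refine (integrable_const (1:ℝ)).mono' hgcont.aestronglyMeasurable ?_
      exact ae_of_all _ fun x => by
        rw [Real.norm_eq_abs, abs_of_nonneg (hg01 x).1]; exact (hg01 x).2
    -- convergence of integrals of g
    have hgconv : Tendsto (fun k => ∫ x, g x ∂(μm k)) atTop (𝓝 (∫ x, g x ∂νm)) := by
      have hsub : ∀ (μ : Measure S), IsProbabilityMeasure μ →
          ∫ x, g x ∂μ = 1 - ∫ x, U n ε x ∂μ := by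
        intro μ hμ
        have hUint : Integrable (U n ε) μ := by
          refine (integrable_const (1:ℝ)).mono' hUcont.aestronglyMeasurable ?_
          exact ae_of_all _ fun x => by
            rw [Real.norm_eq_abs, abs_of_nonneg (hUmem x).1]; exact (hUmem x).2
        rw [hg]
        rw [integral_sub (integrable_const 1) hUint]
        simp [measure_univ]
      have e1 : ∀ k, ∫ x, g x ∂(μm k) = 1 - ∫ x, U n ε x ∂(μm k) :=
        fun k => hsub _ (hμprob k)
      simp only [e1, hsub νm hνprob]
      exact tendsto_const_nhds.sub (hintU n ε hεQ)
    -- pointwise comparisons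
    have bound1 : ∀ k, ENNReal.ofReal (∫ x, g x ∂(μm k)) ≤ μm k (F n)ᶜ := by
      intro k
      haveI := hμprob k
      rw [ofReal_integral_eq_lintegral_ofReal (hgint _ (hμprob k))
        (ae_of_all _ fun x => (hg01 x).1)]
      have hmono : ∀ x, ENNReal.ofReal (g x) ≤ Set.indicator ((F n)ᶜ) (fun _ => (1:ℝ≥0∞)) x := by
        intro x
        by_cases hx : x ∈ F n
        · have : U n ε x = 1 := (hU1 x).2 hx
          simp [Set.indicator_of_notMem, hx, hg, this]
        · rw [Set.indicator_of_mem (by simpa using hx)]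
          exact (ENNReal.ofReal_le_one).2 (hg01 x).2
      calc ∫⁻ x, ENNReal.ofReal (g x) ∂(μm k)
          ≤ ∫⁻ x, Set.indicator ((F n)ᶜ) (fun _ => (1:ℝ≥0∞)) x ∂(μm k) := lintegral_mono hmono
        _ = μm k (F n)ᶜ := lintegral_indicator_one (hFclosed n).measurableSet.compl
    have bound2 : νm (Metric.thickening (ε:ℝ) (F n))ᶜ ≤ ENNReal.ofReal (∫ x, g x ∂νm) := by
      rw [ofReal_integral_eq_lintegral_ofReal (hgint _ hνprob)
        (ae_of_all _ fun x => (hg01 x).1)]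
      have hmono : ∀ x, Set.indicator ((Metric.thickening (ε:ℝ) (F n))ᶜ) (fun _ => (1:ℝ≥0∞)) x
          ≤ ENNReal.ofReal (g x) := by
        intro x
        by_cases hx : x ∈ Metric.thickening (ε:ℝ) (F n)
        · simp [Set.indicator_of_notMem, hx]
        · have : U n ε x = 0 := (hU0 x).2 hx
          rw [Set.indicator_of_mem (by simpa using hx)]
          simp [hg, this]
      calc νm (Metric.thickening (ε:ℝ) (F n))ᶜ
          = ∫⁻ x, Set.indicator ((Metric.thickening (ε:ℝ) (F n))ᶜ) (fun _ => (1:ℝ≥0∞)) x ∂νm :=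
            (lintegral_indicator_one Metric.isOpen_thickening.measurableSet.compl).symm
        _ ≤ ∫⁻ x, ENNReal.ofReal (g x) ∂νm := lintegral_mono hmono
    -- liminf bound
    have hliminf : νm (Metric.thickening (ε:ℝ) (F n))ᶜ
        ≤ atTop.liminf (fun k => μm k (F n)ᶜ) := by
      have h1 : Tendsto (fun k => ENNReal.ofReal (∫ x, g x ∂(μm k))) atTop
          (𝓝 (ENNReal.ofReal (∫ x, g x ∂νm))) :=
        (ENNReal.continuous_ofReal.tendsto _).comp hgconv
      calc νm (Metric.thickening (ε:ℝ) (F n))ᶜ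
          ≤ ENNReal.ofReal (∫ x, g x ∂νm) := bound2
        _ = atTop.liminf (fun k => ENNReal.ofReal (∫ x, g x ∂(μm k))) := h1.liminf_eq.symm
        _ ≤ atTop.liminf (fun k => μm k (F n)ᶜ) :=
            liminf_le_liminf (Eventually.of_forall bound1)
    -- measure of complement vs complement of thickening
    have hdiff : νm (Metric.thickening (ε:ℝ) (F n) \ F n) ≤ η := by
      have hsubset : F n ⊆ Metric.thickening (ε:ℝ) (F n) :=
        Metric.self_subset_thickening (by exact_mod_cast hε0) _
      rw [measure_diff hsubset (hFclosed n).measurableSet.nullMeasurableSet (measure_ne_top _ _)]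
      refine tsub_le_iff_right.mpr ?_
      calc νm (Metric.thickening (ε:ℝ) (F n))
          ≤ νm (Metric.thickening δ (F n)) :=
            measure_mono (Metric.thickening_mono (le_of_lt hεδ) _)
        _ ≤ νm (F n) + η := hδ.le
        _ = η + νm (F n) := by ring
    have hcover : (F n)ᶜ ⊆ (Metric.thickening (ε:ℝ) (F n))ᶜ ∪
        (Metric.thickening (ε:ℝ) (F n) \ F n) := by
      intro x hx
      by_cases hx2 : x ∈ Metric.thickening (ε:ℝ) (F n)
      · exact Or.inr ⟨hx2, hx⟩
      · exact Or.inl hx2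
    calc νm (F n)ᶜ ≤ νm (Metric.thickening (ε:ℝ) (F n))ᶜ +
          νm (Metric.thickening (ε:ℝ) (F n) \ F n) :=
          (measure_mono hcover).trans (measure_union_le _ _)
      _ ≤ atTop.liminf (fun k => μm k (F n)ᶜ) + η := add_le_add hliminf hdiff
  -- π-system: finite intersections of the F n are again F j
  have hpi' : ∀ s : Finset ℕ, s.Nonempty → ∃ j, (⋂ i ∈ s, F i) = F j := by
    intro s hs
    induction s using Finset.induction with
    | empty => simp at hs
    | @insert a s ha ih =>
      rcases s.eq_empty_or_nonempty with rfl | hs'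
      · exact ⟨a, by simp⟩
      · obtain ⟨j, hj⟩ := ih hs'
        obtain ⟨k, hk⟩ := hpi a j
        exact ⟨k, by rw [Finset.set_biInter_insert, hj, hk]⟩
  -- open-set liminf condition
  have h_opens : ∀ G, IsOpen G → νm G ≤ atTop.liminf (fun k => μm k G) := by
    intro G hG
    set A : ℕ → Set S := fun N =>
      ⋃ i ∈ (Finset.range N).filter (fun i => (F i)ᶜ ⊆ G), (F i)ᶜ with hA
    have hAsubG : ∀ N, A N ⊆ G := by
      intro N
      exact Set.iUnion₂_subset fun i hi => (Finset.mem_filter.mp hi).2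
    have hAmono : Monotone A := by
      intro a b hab x hx
      obtain ⟨i, hi, hxi⟩ := Set.mem_iUnion₂.mp hx
      refine Set.mem_iUnion₂.mpr ⟨i, ?_, hxi⟩
      rw [Finset.mem_filter] at hi ⊢
      exact ⟨Finset.mem_range.mpr (lt_of_lt_of_le (Finset.mem_range.mp hi.1) hab), hi.2⟩
    have hAUnion : (⋃ N, A N) = G := by
      apply Set.Subset.antisymm (Set.iUnion_subset hAsubG)
      intro x hx
      obtain ⟨v, hv, hxv, hvG⟩ := hbase.exists_subset_of_mem_open hx hG
      obtain ⟨n, rfl⟩ := hv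
      refine Set.mem_iUnion.mpr ⟨n + 1, Set.mem_iUnion₂.mpr ⟨n, ?_, hxv⟩⟩
      exact Finset.mem_filter.mpr ⟨Finset.mem_range.mpr (Nat.lt_succ_self n), hvG⟩
    have hAN : ∀ N, νm (A N) ≤ atTop.liminf (fun k => μm k G) := by
      intro N
      rcases ((Finset.range N).filter (fun i => (F i)ᶜ ⊆ G)).eq_empty_or_nonempty with he | hne
      · have : A N = ∅ := by
          simp only [hA]
          rw [he]
          simp
        simp [this]
      · obtain ⟨j, hj⟩ := hpi' _ hne
        have hANeq : A N = (F j)ᶜ := by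
          rw [hA]
          simp only [← hj, Set.compl_iInter]
        have hjG : (F j)ᶜ ⊆ G := hANeq ▸ hAsubG N
        calc νm (A N) = νm (F j)ᶜ := by rw [hANeq]
          _ ≤ atTop.liminf (fun k => μm k (F j)ᶜ) := key j
          _ ≤ atTop.liminf (fun k => μm k G) :=
              liminf_le_liminf (Eventually.of_forall fun k => measure_mono hjG)
    have htend : Tendsto (fun N => νm (A N)) atTop (𝓝 (νm G)) := by
      have := tendsto_measure_iUnion_atTop (μ := νm) hAmono
      rwa [hAUnion] at this
    exact le_of_tendsto htend (Eventually.of_forall hAN)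
  -- package as probability measures and apply portmanteau
  let μp : ℕ → ProbabilityMeasure S := fun k => ⟨μm k, hμprob k⟩
  let νp : ProbabilityMeasure S := ⟨νm, hνprob⟩
  have h_opens' : ∀ G, IsOpen G → νp G ≤ atTop.liminf (fun k => μp k G) := by
    intro G hG
    have h := h_opens G hG
    have aux : ((atTop.liminf fun k => μp k G : ℝ≥0) : ℝ≥0∞)
        = atTop.liminf (fun k => ((μp k G : ℝ≥0) : ℝ≥0∞)) := by
      refine Monotone.map_liminf_of_continuousAt (F := atTop) ENNReal.coe_mono
        (fun k => μp k G) ENNReal.continuous_coe.continuousAt ?_ ?_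
      · exact IsBoundedUnder.isCoboundedUnder_ge ⟨1, by simp⟩
      · exact ⟨0, by simp⟩
    rw [← ENNReal.coe_le_coe, aux]
    simp only [ProbabilityMeasure.ennreal_coeFn_eq_coeFn_toMeasure]
    exact h
  have htendp : Tendsto μp atTop (𝓝 νp) := tendsto_of_forall_isOpen_le_liminf h_opens'
  intro f
  have := ProbabilityMeasure.tendsto_iff_forall_integral_tendsto.mp htendp f
  have h1 : ∀ k, ∫ x, f x ∂(μp k : Measure S) = ∫ ω, f (X k ω) ∂P := fun k =>
    integral_map (hX k).aemeasurable f.continuous.aestronglyMeasurable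
  have h2 : ∫ x, f x ∂(νp : Measure S) = ∫ ω, f (Y ω) ∂P' :=
    integral_map hY.aemeasurable f.continuous.aestronglyMeasurable
  simpa [h1, h2] using this
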